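/- Let T_S > 0 and T_Z be real numbers with 0 < T_Z ≤ T_S. Let x : ℝ → ℂ satisfy x(t) = 0 for every t not belonging to ⋃_{k ∈ ℤ} [k·T_S + T_Z, (k+1)·T_S]. Let a₁, …, a_L be complex numbers and τ₁, …, τ_L real numbers, with τ_min = min_l τ_l and τ_max = max_l τ_l satisfying τ_max − τ_min < T_Z. Define y(t) = Σ_{l=1}^{L} a_l · x(t − τ_l). Then for every integer m and every t in the open interval (m·T_S + τ_max, m·T_S + T_Z + τ_min), we have y(t) = 0. -/
import Mathlib


/-- Equation (10) of the paper: the transmit signal of `U₂` vanishes outside the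
intervals `[k·T_S + T_Z, (k+1)·T_S]`, and if the zero-interval exceeds the delay
spread, the multipath channel output vanishes on each SI-free interval
`(m·T_S + τ_max, m·T_S + T_Z + τ_min)`. -/
theorem si_free_interval_U2
    (TS TZ : ℝ) (hTS : 0 < TS) (hTZ : 0 < TZ) (hTZS : TZ ≤ TS)
    (x : ℝ → ℂ)
    (hx : ∀ t : ℝ, (¬ ∃ k : ℤ, k * TS + TZ ≤ t ∧ t ≤ (k + 1) * TS) → x t = 0)
    (L : ℕ) (hL : 0 < L) (a : Fin L → ℂ) (τ : Fin L → ℝ)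
    (hspread : (Finset.univ.sup' (Finset.univ_nonempty_iff.mpr
        (Fin.pos_iff_nonempty.mp hL)) τ) -
      (Finset.univ.inf' (Finset.univ_nonempty_iff.mpr
        (Fin.pos_iff_nonempty.mp hL)) τ) < TZ) :
    ∀ m : ℤ, ∀ t : ℝ,
      m * TS + (Finset.univ.sup' (Finset.univ_nonempty_iff.mpr
        (Fin.pos_iff_nonempty.mp hL)) τ) < t →
      t < m * TS + TZ + (Finset.univ.inf' (Finset.univ_nonempty_iff.mpr
        (Fin.pos_iff_nonempty.mp hL)) τ) →
      (∑ l : Fin L, a l * x (t - τ l)) = 0 := by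
  intro m t h1 h2
  apply Finset.sum_eq_zero
  intro l _
  have hle : τ l ≤ Finset.univ.sup' (Finset.univ_nonempty_iff.mpr
      (Fin.pos_iff_nonempty.mp hL)) τ := Finset.le_sup' τ (Finset.mem_univ l)
  have hge : Finset.univ.inf' (Finset.univ_nonempty_iff.mpr
      (Fin.pos_iff_nonempty.mp hL)) τ ≤ τ l := Finset.inf'_le τ (Finset.mem_univ l)
  have hx0 : x (t - τ l) = 0 := by
    apply hx
    rintro ⟨k, hk1, hk2⟩
    have hs1 : (m : ℝ) * TS < t - τ l := by linarith
    have hs2 : t - τ l < m * TS + TZ := by linarith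
    rcases le_or_gt k (m - 1) with hk | hk
    · have : ((k : ℝ) + 1) ≤ (m : ℝ) := by exact_mod_cast by omega
      nlinarith
    · have : (m : ℝ) ≤ (k : ℝ) := by exact_mod_cast by omega
      nlinarith
  rw [hx0, mul_zero]
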